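/- Assume limsup_{K→∞} (1/K) Σ_k d_k² σ_rk⁶ ξ_k² < ∞, limsup_{K→∞} (1/K) Σ_k d_k² σ_rk⁶ σ_ok² < ∞, limsup_{K→∞} (1/K) Σ_k d_k² σ_rk⁸ < ∞, and limsup_{K→∞} (1/K) Σ_k d_k² σ_rk⁴ < ∞. Then sup_{0 ≤ λ ≤ 1} |URE_K(λ) − L_K(λ)| → 0 in L² (and hence in probability) as K → ∞, where URE_K(λ) = (1/K)[Σ_k d_k σ_rk² + λ² Σ_k d_k σ_rk⁴ Δ_k² − 2λ Σ_k d_k σ_rk⁴] and L_K(λ) = (1/K) Σ_k d_k (τ̂_rk − λ σ_rk² (τ̂_rk − τ̂_ok) − τ_k)². -/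

import Mathlib

open MeasureTheory ProbabilityTheory Filter


open Real Set
open scoped NNReal ENNReal

lemma aux_ciSup_abs_affine (a b : ℝ) :
    (⨆ l : Set.Icc (0:ℝ) 1, |a - 2 * (l:ℝ) * b|) = max |a| |a - 2*b| := by
  have hb : ∀ l : Set.Icc (0:ℝ) 1, |a - 2 * (l:ℝ) * b| ≤ max |a| |a - 2*b| := by
    rintro ⟨l, hl0, hl1⟩
    have h : a - 2 * l * b = (1-l)*a + l*(a-2*b) := by ring
    simp only [h]
    calc |(1-l)*a + l*(a-2*b)| ≤ |(1-l)*a| + |l*(a-2*b)| := abs_add_le _ _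
      _ = (1-l)*|a| + l*|a-2*b| := by
          rw [abs_mul, abs_mul, abs_of_nonneg (by linarith), abs_of_nonneg hl0]
      _ ≤ (1-l)*(max |a| |a-2*b|) + l*(max |a| |a-2*b|) := by
          have h1 : |a| ≤ max |a| |a-2*b| := le_max_left _ _
          have h2 : |a-2*b| ≤ max |a| |a-2*b| := le_max_right _ _
          have h3 : (0:ℝ) ≤ 1 - l := by linarith
          nlinarith
      _ = max |a| |a-2*b| := by ring
  have hbdd : BddAbove (Set.range fun l : Set.Icc (0:ℝ) 1 => |a - 2 * (l:ℝ) * b|) :=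
    ⟨max |a| |a - 2*b|, by rintro x ⟨l, rfl⟩; exact hb l⟩
  refine le_antisymm (ciSup_le hb) (max_le ?_ ?_)
  · have := le_ciSup hbdd (⟨0, le_refl _, zero_le_one⟩ : Set.Icc (0:ℝ) 1)
    simpa using this
  · have := le_ciSup hbdd (⟨1, zero_le_one, le_refl _⟩ : Set.Icc (0:ℝ) 1)
    simpa using this

lemma aux_integrable_mul_L2 {Ω : Type*} [MeasurableSpace Ω] {P : Measure Ω} {f g : Ω → ℝ}
    (hf : MemLp f 2 P) (hg : MemLp g 2 P) : Integrable (fun ω => f ω * g ω) P := by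
  refine Integrable.mono' (((hf.integrable_sq).add hg.integrable_sq).const_mul (1/2))
    (hf.aestronglyMeasurable.mul hg.aestronglyMeasurable) ?_
  filter_upwards with ω
  simp only [Pi.add_apply, Real.norm_eq_abs]
  have habs : |f ω * g ω| = |f ω| * |g ω| := abs_mul _ _
  nlinarith [sq_abs (f ω), sq_abs (g ω), sq_nonneg (|f ω| - |g ω|), abs_nonneg (f ω),
    abs_nonneg (g ω)]


lemma aux_integrable_pow_mul_exp (n : ℕ) {b : ℝ} (hb : 0 < b) :
    Integrable (fun x : ℝ => x ^ n * Real.exp (-b * x^2)) := by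
  have h := integrable_rpow_mul_exp_neg_mul_sq hb (s := (n:ℝ)) (by
    have : (0:ℝ) ≤ n := Nat.cast_nonneg n
    linarith)
  have he : ∀ x : ℝ, x ^ (n:ℝ) = x ^ n := fun x => Real.rpow_natCast x n
  simpa [he] using h

lemma aux_integral_pow_mul_exp_even (m : ℕ) {b : ℝ} (hb : 0 < b) :
    ∫ x : ℝ, x ^ (2*m) * Real.exp (-b * x^2)
      = b ^ (-(2*(m:ℝ)+1)/2) * Real.Gamma ((2*(m:ℝ)+1)/2) := by
  have heven : ∀ x : ℝ, |x| ^ (2*m) * Real.exp (-b * |x|^2) = x ^ (2*m) * Real.exp (-b * x^2) := by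
    intro x
    rw [sq_abs, pow_mul, sq_abs, ← pow_mul]
  calc ∫ x : ℝ, x ^ (2*m) * Real.exp (-b * x^2)
      = ∫ x : ℝ, (fun t => t ^ (2*m) * Real.exp (-b * t^2)) |x| := by
        congr 1; funext x; exact (heven x).symm
    _ = 2 * ∫ x in Ioi (0:ℝ), x ^ (2*m) * Real.exp (-b * x^2) :=
        integral_comp_abs (f := fun t : ℝ => t ^ (2*m) * Real.exp (-b * t^2))
    _ = 2 * ∫ x in Ioi (0:ℝ), x ^ ((2*(m:ℝ)) : ℝ) * Real.exp (-b * x ^ (2:ℝ)) := by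
        congr 1
        refine setIntegral_congr_fun measurableSet_Ioi (fun x hx => ?_)
        rw [show ((2*(m:ℝ)) : ℝ) = ((2*m : ℕ) : ℝ) by push_cast; ring, Real.rpow_natCast,
          show ((2:ℝ)) = ((2:ℕ):ℝ) by norm_num, Real.rpow_natCast]
    _ = 2 * (b ^ (-(2*(m:ℝ)+1)/2) * (1/2) * Real.Gamma ((2*(m:ℝ)+1)/2)) := by
        rw [integral_rpow_mul_exp_neg_mul_rpow two_pos
          (by have : (0:ℝ) ≤ (m:ℝ) := Nat.cast_nonneg m; linarith) hb]
    _ = b ^ (-(2*(m:ℝ)+1)/2) * Real.Gamma ((2*(m:ℝ)+1)/2) := by ring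

lemma aux_Gamma_three_half : Real.Gamma (3/2) = Real.sqrt π / 2 := by
  have h := Real.Gamma_add_one (s := (1/2 : ℝ)) (by norm_num)
  rw [show (1/2 : ℝ) + 1 = 3/2 by norm_num] at h
  rw [h, Real.Gamma_one_half_eq]; ring

lemma aux_Gamma_five_half : Real.Gamma (5/2) = 3 * Real.sqrt π / 4 := by
  have h := Real.Gamma_add_one (s := (3/2 : ℝ)) (by norm_num)
  rw [show (3/2 : ℝ) + 1 = 5/2 by norm_num] at h
  rw [h, aux_Gamma_three_half]; ring


section gauss
variable {v : ℝ≥0}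

lemma aux_pdf_eq (v : ℝ≥0) (x : ℝ) :
    gaussianPDFReal 0 v x = (Real.sqrt (2 * π * v))⁻¹ * Real.exp (-(2*(v:ℝ))⁻¹ * x^2) := by
  rw [gaussianPDFReal, sub_zero]
  congr 1
  rw [neg_div, div_eq_inv_mul, ← neg_mul]

lemma aux_integrable_pow_gaussian (hv : v ≠ 0) (n : ℕ) :
    Integrable (fun x : ℝ => x ^ n) (gaussianReal 0 v) := by
  have hvpos : (0:ℝ) < v := by exact_mod_cast pos_iff_ne_zero.mpr hv
  have hb : (0:ℝ) < (2*(v:ℝ))⁻¹ := by positivity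
  rw [gaussianReal_of_var_ne_zero 0 hv]
  rw [integrable_withDensity_iff (measurable_gaussianPDF 0 v)
    (Filter.Eventually.of_forall fun x => ENNReal.ofReal_lt_top)]
  have heq : (fun x : ℝ => x ^ n * (gaussianPDF 0 v x).toReal)
      = fun x : ℝ => (Real.sqrt (2 * π * v))⁻¹ * (x ^ n * Real.exp (-(2*(v:ℝ))⁻¹ * x^2)) := by
    funext x
    rw [gaussianPDF, ENNReal.toReal_ofReal (gaussianPDFReal_nonneg 0 v x), aux_pdf_eq]
    ring
  rw [heq]
  exact (aux_integrable_pow_mul_exp n hb).const_mul _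

lemma aux_integral_pow_gaussian (hv : v ≠ 0) (n : ℕ) :
    ∫ x, x ^ n ∂(gaussianReal 0 v)
      = (Real.sqrt (2 * π * v))⁻¹ * ∫ x : ℝ, x ^ n * Real.exp (-(2*(v:ℝ))⁻¹ * x^2) := by
  rw [gaussianReal_of_var_ne_zero 0 hv]
  have hpdf : (gaussianPDF 0 v) = fun x => (((gaussianPDFReal 0 v x).toNNReal : ℝ≥0) : ℝ≥0∞) := by
    funext x
    rw [gaussianPDF, ENNReal.ofReal]
  rw [hpdf, integral_withDensity_eq_integral_smul
    ((measurable_gaussianPDFReal 0 v).real_toNNReal)]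
  rw [← integral_const_mul]
  congr 1
  funext x
  simp only [NNReal.smul_def, smul_eq_mul]
  rw [Real.coe_toNNReal _ (gaussianPDFReal_nonneg 0 v x), aux_pdf_eq]
  ring

lemma aux_integral_pow_one_gaussian (hv : v ≠ 0) : ∫ x, x ∂(gaussianReal 0 v) = 0 := by
  have h := aux_integral_pow_gaussian hv 1
  simp only [pow_one] at h
  rw [h]
  simp only [neg_mul]
  have hodd := integral_neg_eq_self (fun x : ℝ => x * Real.exp (-(2*(v:ℝ))⁻¹ * x^2))
    (volume : Measure ℝ)
  simp only [neg_sq, neg_mul, integral_neg] at hodd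
  have hI : ∫ x : ℝ, x * Real.exp (-((2*(v:ℝ))⁻¹ * x^2)) = 0 := by linarith
  rw [hI, mul_zero]

lemma aux_sqrt_ne (hv : v ≠ 0) :
    Real.sqrt (2*(v:ℝ)) ≠ 0 ∧ Real.sqrt π ≠ 0 ∧ (0:ℝ) < (v:ℝ) := by
  have hvpos : (0:ℝ) < v := by exact_mod_cast pos_iff_ne_zero.mpr hv
  refine ⟨?_, ?_, hvpos⟩
  · positivity
  · positivity

lemma aux_rpow_inv_base (hv : v ≠ 0) (y : ℝ) :
    ((2*(v:ℝ))⁻¹) ^ (-y) = (2*(v:ℝ)) ^ y := by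
  have hvpos : (0:ℝ) < v := by exact_mod_cast pos_iff_ne_zero.mpr hv
  have h2v : (0:ℝ) < 2*(v:ℝ) := by positivity
  rw [Real.inv_rpow h2v.le, Real.rpow_neg h2v.le, inv_inv]

lemma aux_sqrt_2piv (v : ℝ≥0) : Real.sqrt (2 * π * v) = Real.sqrt (2*(v:ℝ)) * Real.sqrt π := by
  rw [← Real.sqrt_mul (by positivity)]
  congr 1
  ring

lemma aux_integral_sq_gaussian (hv : v ≠ 0) : ∫ x, x^2 ∂(gaussianReal 0 v) = v := by
  obtain ⟨hs2v, hspi, hvpos⟩ := aux_sqrt_ne hv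
  have h2v : (0:ℝ) < 2*(v:ℝ) := by positivity
  have hb : (0:ℝ) < (2*(v:ℝ))⁻¹ := by positivity
  rw [aux_integral_pow_gaussian hv 2,
    show (2:ℕ) = 2*1 by norm_num, aux_integral_pow_mul_exp_even 1 hb]
  have he : (-(2*(1:ℝ)+1)/2) = -(3/2 : ℝ) := by norm_num
  have hg : ((2*(1:ℝ)+1)/2) = (3/2 : ℝ) := by norm_num
  simp only [Nat.cast_one] at *
  rw [he, hg, aux_Gamma_three_half, aux_rpow_inv_base hv (3/2)]
  have h32 : (2*(v:ℝ)) ^ ((3:ℝ)/2) = (2*(v:ℝ)) * Real.sqrt (2*(v:ℝ)) := by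
    rw [show (3:ℝ)/2 = 1 + 1/2 by norm_num, Real.rpow_add h2v, Real.rpow_one,
      ← Real.sqrt_eq_rpow]
  rw [h32, aux_sqrt_2piv]
  have hsq : Real.sqrt (2*(v:ℝ)) * Real.sqrt (2*(v:ℝ)) = 2*(v:ℝ) :=
    Real.mul_self_sqrt h2v.le
  field_simp

lemma aux_integral_pow4_gaussian (hv : v ≠ 0) : ∫ x, x^4 ∂(gaussianReal 0 v) = 3*(v:ℝ)^2 := by
  obtain ⟨hs2v, hspi, hvpos⟩ := aux_sqrt_ne hv
  have h2v : (0:ℝ) < 2*(v:ℝ) := by positivity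
  have hb : (0:ℝ) < (2*(v:ℝ))⁻¹ := by positivity
  rw [aux_integral_pow_gaussian hv 4,
    show (4:ℕ) = 2*2 by norm_num, aux_integral_pow_mul_exp_even 2 hb]
  have he : (-(2*(2:ℝ)+1)/2) = -(5/2 : ℝ) := by norm_num
  have hg : ((2*(2:ℝ)+1)/2) = (5/2 : ℝ) := by norm_num
  simp only [Nat.cast_ofNat] at *
  rw [he, hg, aux_Gamma_five_half, aux_rpow_inv_base hv (5/2)]
  have h2nat : (2*(v:ℝ)) ^ (((2:ℕ):ℝ)) = (2*(v:ℝ))^(2:ℕ) := Real.rpow_natCast _ 2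
  have h52 : (2*(v:ℝ)) ^ ((5:ℝ)/2) = (2*(v:ℝ))^(2:ℕ) * Real.sqrt (2*(v:ℝ)) := by
    rw [show (5:ℝ)/2 = ((2:ℕ):ℝ) + 1/2 by norm_num, Real.rpow_add h2v, h2nat,
      ← Real.sqrt_eq_rpow]
  rw [h52, aux_sqrt_2piv]
  have hsq : Real.sqrt (2*(v:ℝ)) * Real.sqrt (2*(v:ℝ)) = 2*(v:ℝ) :=
    Real.mul_self_sqrt h2v.le
  field_simp
  nlinarith [hsq]

end gauss


lemma aux_centered_moment {Ω : Type*} [MeasurableSpace Ω] {P : Measure Ω}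
    {X : Ω → ℝ} {m : ℝ} {v : ℝ≥0} (hv : v ≠ 0) (hX : Measurable X)
    (hmap : P.map X = gaussianReal m v) (n : ℕ) :
    Integrable (fun ω => (X ω - m)^n) P ∧
      ∫ ω, (X ω - m)^n ∂P = ∫ x, x^n ∂(gaussianReal 0 v) := by
  have hY : P.map (fun ω => X ω - m) = gaussianReal 0 v := by
    have hcomp : (fun ω => X ω - m) = (fun x => x + (-m)) ∘ X := by
      funext ω; simp [sub_eq_add_neg]
    rw [hcomp, ← Measure.map_map (measurable_add_const _) hX, hmap,
      gaussianReal_map_add_const, add_neg_cancel]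
  have hYm : Measurable fun ω => X ω - m := hX.sub_const m
  have hgm : Measurable fun x : ℝ => x ^ n := measurable_id.pow_const n
  constructor
  · have hint := integrable_map_measure (f := fun ω => X ω - m) (g := fun x : ℝ => x^n)
      (by rw [hY]; exact hgm.aestronglyMeasurable) hYm.aemeasurable
    rw [hY] at hint
    exact hint.mp (aux_integrable_pow_gaussian hv n)
  · have := integral_map (φ := fun ω => X ω - m) (f := fun x : ℝ => x^n)
      hYm.aemeasurable (by rw [hY]; exact hgm.aestronglyMeasurable)
    rw [hY] at this
    exact this.symm

lemma aux_integral_sum_sq {Ω : Type*} [MeasurableSpace Ω] {P : Measure Ω}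
    {n : ℕ} (Z : Fin n → Ω → ℝ)
    (hint : ∀ k j, Integrable (fun ω => Z k ω * Z j ω) P)
    (horth : ∀ k j, k ≠ j → ∫ ω, Z k ω * Z j ω ∂P = 0) :
    ∫ ω, (∑ k, Z k ω)^2 ∂P = ∑ k, ∫ ω, Z k ω * Z k ω ∂P := by
  have hexp : ∀ ω, (∑ k, Z k ω)^2 = ∑ k, ∑ j, Z k ω * Z j ω := by
    intro ω; rw [sq, Finset.sum_mul_sum]
  simp_rw [hexp]
  rw [integral_finset_sum _ (fun k _ => integrable_finset_sum _ (fun j _ => hint k j))]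
  refine Finset.sum_congr rfl (fun k _ => ?_)
  rw [integral_finset_sum _ (fun j _ => hint k j),
    Finset.sum_eq_single k (fun j _ hj => horth k j (Ne.symm hj)) (by simp)]

lemma aux_W_moments {Ω : Type*} [MeasurableSpace Ω] {P : Measure Ω} [IsProbabilityMeasure P]
    {f : Ω → ℝ} (hmem : MemLp f 2 P) {m ξ so : ℝ}
    (hmean : ∫ ω, f ω ∂P = m + ξ) (hvar : variance f P = so^2) :
    MemLp (fun ω => f ω - m) 2 P ∧ (∫ ω, (f ω - m) ∂P = ξ) ∧
      ∫ ω, (f ω - m)^2 ∂P = so^2 + ξ^2 := by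
  have hW : MemLp (fun ω => f ω - m) 2 P := hmem.sub (memLp_const m)
  have hfint : Integrable f P := hmem.integrable one_le_two
  have hsq : Integrable (fun ω => f ω^2) P := hmem.integrable_sq
  refine ⟨hW, ?_, ?_⟩
  · rw [integral_sub hfint (integrable_const m), hmean, integral_const]
    simp
  · have hv := variance_eq_sub hmem
    simp only [Pi.pow_apply] at hv
    have hexp : (fun ω => (f ω - m)^2) = fun ω => (f ω^2 - (2*m)*f ω) + m^2 :=
      funext fun ω => by ring
    have hsub : Integrable (fun ω => f ω^2 - 2*m*f ω) P := by
      have h := hsq.sub (hfint.const_mul (2*m)); exact h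
    rw [hexp, integral_add hsub (integrable_const _),
      integral_sub hsq (hfint.const_mul _), integral_const_mul, integral_const]
    simp only [measure_univ, ENNReal.toReal_one, probReal_univ, smul_eq_mul, one_mul]
    have h2 : ∫ ω, f ω^2 ∂P = so^2 + (∫ ω, f ω ∂P)^2 := by
      rw [← hvar, hv]; ring
    rw [h2, hmean]
    ring


lemma aux_integrable_sum_sq {Ω : Type*} [MeasurableSpace Ω] {P : Measure Ω}
    {n : ℕ} (Z : Fin n → Ω → ℝ)
    (hint : ∀ k j, Integrable (fun ω => Z k ω * Z j ω) P) :
    Integrable (fun ω => (∑ k, Z k ω)^2) P := by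
  have hexp : (fun ω => (∑ k, Z k ω)^2) = fun ω => ∑ k, ∑ j, Z k ω * Z j ω :=
    funext fun ω => by rw [sq, Finset.sum_mul_sum]
  rw [hexp]
  exact integrable_finset_sum _ (fun k _ => integrable_finset_sum _ (fun j _ => hint k j))

lemma aux_max_sq_bound (a c dd : ℝ) :
    (max |a| |a - 2*(c+dd)|)^2 ≤ 3*a^2 + 16*c^2 + 16*dd^2 := by
  rcases max_cases |a| |a - 2*(c+dd)| with ⟨h1, _⟩ | ⟨h1, _⟩ <;> rw [h1, sq_abs] <;>
    nlinarith [sq_nonneg (c-dd), sq_nonneg (c+dd), sq_nonneg a, sq_nonneg (a + (c+dd)),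
      sq_nonneg (a - (c+dd))]


lemma aux_key {Ω : Type*} [MeasurableSpace Ω] (P : Measure Ω) [IsProbabilityMeasure P]
    (K : ℕ) (d σr σo ξ τv : Fin K → ℝ) (τr τo : Ω → Fin K → ℝ)
    (hσr : ∀ k, 0 < σr k)
    (hτr_meas : ∀ k, Measurable fun ω => τr ω k)
    (hτo_meas : ∀ k, Measurable fun ω => τo ω k)
    (hτr_gauss : ∀ k, P.map (fun ω => τr ω k) = gaussianReal (τv k) ⟨σr k ^ 2, sq_nonneg _⟩)
    (hτr_indep : iIndepFun (fun k ω => τr ω k) P)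
    (hro_indep : IndepFun (fun ω => τr ω) (fun ω => τo ω) P)
    (hτo_mem : ∀ k, MemLp (fun ω => τo ω k) 2 P)
    (hτo_mean : ∀ k, ∫ ω, τo ω k ∂P = τv k + ξ k)
    (hτo_var : ∀ k, variance (fun ω => τo ω k) P = σo k ^ 2) :
    Integrable (fun ω =>
        (⨆ l : Set.Icc (0 : ℝ) 1,
          |(1 / (K : ℝ)) * ((∑ k, d k * σr k ^ 2)
              + (l : ℝ) ^ 2 * ∑ k, d k * σr k ^ 4 * (τo ω k - τr ω k) ^ 2
              - 2 * (l : ℝ) * ∑ k, d k * σr k ^ 4)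
            - (1 / (K : ℝ)) * ∑ k, d k
                * ((τr ω k - (l : ℝ) * σr k ^ 2 * (τr ω k - τo ω k)) - τv k) ^ 2|) ^ 2) P
    ∧ (∫ ω, (⨆ l : Set.Icc (0 : ℝ) 1,
          |(1 / (K : ℝ)) * ((∑ k, d k * σr k ^ 2)
              + (l : ℝ) ^ 2 * ∑ k, d k * σr k ^ 4 * (τo ω k - τr ω k) ^ 2
              - 2 * (l : ℝ) * ∑ k, d k * σr k ^ 4)
            - (1 / (K : ℝ)) * ∑ k, d k
                * ((τr ω k - (l : ℝ) * σr k ^ 2 * (τr ω k - τo ω k)) - τv k) ^ 2|) ^ 2 ∂P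
        ≤ (1/(K:ℝ))^2 * (6 * (∑ k, d k^2 * σr k^4) + 32 * (∑ k, d k^2 * σr k^8)
          + 16 * (∑ k, d k^2 * σr k^6 * σo k^2) + 16 * (∑ k, d k^2 * σr k^6 * ξ k^2)))
    ∧ ∀ ε : ℝ, 0 < ε →
        ε^2 * (P {ω | ε ≤ ⨆ l : Set.Icc (0 : ℝ) 1,
          |(1 / (K : ℝ)) * ((∑ k, d k * σr k ^ 2)
              + (l : ℝ) ^ 2 * ∑ k, d k * σr k ^ 4 * (τo ω k - τr ω k) ^ 2
              - 2 * (l : ℝ) * ∑ k, d k * σr k ^ 4)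
            - (1 / (K : ℝ)) * ∑ k, d k
                * ((τr ω k - (l : ℝ) * σr k ^ 2 * (τr ω k - τo ω k)) - τv k) ^ 2|}).toReal
        ≤ ∫ ω, (⨆ l : Set.Icc (0 : ℝ) 1,
          |(1 / (K : ℝ)) * ((∑ k, d k * σr k ^ 2)
              + (l : ℝ) ^ 2 * ∑ k, d k * σr k ^ 4 * (τo ω k - τr ω k) ^ 2
              - 2 * (l : ℝ) * ∑ k, d k * σr k ^ 4)
            - (1 / (K : ℝ)) * ∑ k, d k
                * ((τr ω k - (l : ℝ) * σr k ^ 2 * (τr ω k - τo ω k)) - τv k) ^ 2|) ^ 2 ∂P := by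
  classical
  -- variance parameters are nonzero
  have hvne : ∀ k, (⟨σr k ^ 2, sq_nonneg _⟩ : ℝ≥0) ≠ 0 := by
    intro k h
    have h2 : σr k ^ 2 = 0 := congrArg NNReal.toReal h
    exact absurd (pow_eq_zero_iff two_ne_zero |>.mp h2) (hσr k).ne'
  -- moments of the Gaussian part
  have hXmom := fun k => aux_centered_moment (hvne k) (hτr_meas k) (hτr_gauss k)
  have hXi1 : ∀ k, Integrable (fun ω => τr ω k - τv k) P := by
    intro k; have h := (hXmom k 1).1; simpa using h
  have hEX1 : ∀ k, ∫ ω, (τr ω k - τv k) ∂P = 0 := by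
    intro k
    have h := (hXmom k 1).2
    rw [show ∫ x, x ^ 1 ∂(gaussianReal 0 (⟨σr k ^ 2, sq_nonneg _⟩ : ℝ≥0))
        = ∫ x, x ∂(gaussianReal 0 (⟨σr k ^ 2, sq_nonneg _⟩ : ℝ≥0)) by simp,
      aux_integral_pow_one_gaussian (hvne k)] at h
    simpa using h
  have hXi2 : ∀ k, Integrable (fun ω => (τr ω k - τv k)^2) P := fun k => (hXmom k 2).1
  have hEX2 : ∀ k, ∫ ω, (τr ω k - τv k)^2 ∂P = σr k^2 := by
    intro k
    have h := (hXmom k 2).2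
    rw [aux_integral_sq_gaussian (hvne k)] at h
    exact h
  have hXi4 : ∀ k, Integrable (fun ω => (τr ω k - τv k)^4) P := fun k => (hXmom k 4).1
  have hEX4 : ∀ k, ∫ ω, (τr ω k - τv k)^4 ∂P = 3*(σr k^2)^2 := by
    intro k
    have h := (hXmom k 4).2
    rw [aux_integral_pow4_gaussian (hvne k)] at h
    exact h
  have hXmem : ∀ k, MemLp (fun ω => τr ω k - τv k) 2 P := fun k =>
    (memLp_two_iff_integrable_sq ((hτr_meas k).sub_const _).aestronglyMeasurable).mpr (hXi2 k)
  -- moments of the second sample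
  have hWfacts := fun k => aux_W_moments (hτo_mem k) (hτo_mean k) (hτo_var k)
  have hWmem : ∀ k, MemLp (fun ω => τo ω k - τv k) 2 P := fun k => (hWfacts k).1
  have hEW2 : ∀ k, ∫ ω, (τo ω k - τv k)^2 ∂P = σo k^2 + ξ k^2 := fun k => (hWfacts k).2.2
  have hWi2 : ∀ k, Integrable (fun ω => (τo ω k - τv k)^2) P := fun k => (hWmem k).integrable_sq
  -- A/C-type facts
  have hACrw : ∀ (c : ℝ) (k : Fin K),
      (fun ω => (c*(σr k^2 - (τr ω k - τv k)^2)) * (c*(σr k^2 - (τr ω k - τv k)^2)))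
      = fun ω => (c^2*(σr k^2)^2) + ((-(2*c^2*σr k^2))*(τr ω k - τv k)^2
          + c^2*(τr ω k - τv k)^4) := fun c k => funext fun ω => by ring
  have hACint2 : ∀ (c : ℝ) (k : Fin K), Integrable
      (fun ω => (c*(σr k^2 - (τr ω k - τv k)^2)) * (c*(σr k^2 - (τr ω k - τv k)^2))) P := by
    intro c k
    rw [hACrw]
    exact (integrable_const _).add (((hXi2 k).const_mul _).add ((hXi4 k).const_mul _))
  have hACval : ∀ (c : ℝ) (k : Fin K),
      ∫ ω, (c*(σr k^2 - (τr ω k - τv k)^2)) * (c*(σr k^2 - (τr ω k - τv k)^2)) ∂P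
        = 2*c^2*(σr k^2)^2 := by
    intro c k
    rw [show (∫ ω, (c*(σr k^2 - (τr ω k - τv k)^2)) * (c*(σr k^2 - (τr ω k - τv k)^2)) ∂P)
        = ∫ ω, (c^2*(σr k^2)^2) + ((-(2*c^2*σr k^2))*(τr ω k - τv k)^2
            + c^2*(τr ω k - τv k)^4) ∂P from congrArg _ (hACrw c k)]
    have hI2 : Integrable (fun ω => (-(2*c^2*σr k^2))*(τr ω k - τv k)^2) P :=
      (hXi2 k).const_mul _
    have hI4 : Integrable (fun ω => c^2*(τr ω k - τv k)^4) P := (hXi4 k).const_mul _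
    have hI24 : Integrable (fun ω => (-(2*c^2*σr k^2))*(τr ω k - τv k)^2
        + c^2*(τr ω k - τv k)^4) P := by
      have h := hI2.add hI4; exact h
    rw [integral_add (integrable_const _) hI24, integral_add hI2 hI4,
      integral_const, integral_const_mul, integral_const_mul, hEX2, hEX4]
    simp only [measure_univ, ENNReal.toReal_one, probReal_univ, smul_eq_mul, one_mul]
    ring
  have hACint1 : ∀ (c : ℝ) (k : Fin K),
      Integrable (fun ω => c*(σr k^2 - (τr ω k - τv k)^2)) P := by
    intro c k
    have hrw : (fun ω => c*(σr k^2 - (τr ω k - τv k)^2))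
        = fun ω => c*σr k^2 - c*(τr ω k - τv k)^2 := funext fun ω => by ring
    rw [hrw]
    exact (integrable_const _).sub ((hXi2 k).const_mul _)
  have hACmean : ∀ (c : ℝ) (k : Fin K),
      ∫ ω, c*(σr k^2 - (τr ω k - τv k)^2) ∂P = 0 := by
    intro c k
    have hrw : (fun ω => c*(σr k^2 - (τr ω k - τv k)^2))
        = fun ω => c*σr k^2 - c*(τr ω k - τv k)^2 := funext fun ω => by ring
    rw [show (∫ ω, c*(σr k^2 - (τr ω k - τv k)^2) ∂P)
        = ∫ ω, c*σr k^2 - c*(τr ω k - τv k)^2 ∂P from congrArg _ hrw,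
      integral_sub (integrable_const _) ((hXi2 k).const_mul _),
      integral_const, integral_const_mul, hEX2]
    simp only [measure_univ, ENNReal.toReal_one, probReal_univ, smul_eq_mul, one_mul]
    ring
  have hAind : ∀ (c c' : ℝ) (k j : Fin K), k ≠ j →
      IndepFun (fun ω => c*(σr k^2 - (τr ω k - τv k)^2))
        (fun ω => c'*(σr j^2 - (τr ω j - τv j)^2)) P := by
    intro c c' k j hkj
    exact (hτr_indep.indepFun hkj).comp
      ((((measurable_id.sub_const (τv k)).pow_const 2).const_sub (σr k^2)).const_mul c)
      ((((measurable_id.sub_const (τv j)).pow_const 2).const_sub (σr j^2)).const_mul c')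
  have hACcross : ∀ (c c' : ℝ) (k j : Fin K), k ≠ j →
      (Integrable (fun ω => (c*(σr k^2 - (τr ω k - τv k)^2))
          * (c'*(σr j^2 - (τr ω j - τv j)^2))) P
      ∧ ∫ ω, (c*(σr k^2 - (τr ω k - τv k)^2)) * (c'*(σr j^2 - (τr ω j - τv j)^2)) ∂P = 0) := by
    intro c c' k j hkj
    constructor
    · exact (hAind c c' k j hkj).integrable_mul (hACint1 c k) (hACint1 c' j)
    · have h : ∫ ω, (c*(σr k^2 - (τr ω k - τv k)^2)) * (c'*(σr j^2 - (τr ω j - τv j)^2)) ∂P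
          = (∫ ω, c*(σr k^2 - (τr ω k - τv k)^2) ∂P)
            * ∫ ω, c'*(σr j^2 - (τr ω j - τv j)^2) ∂P :=
        (hAind c c' k j hkj).integral_fun_mul_eq_mul_integral (hACint1 c k).aestronglyMeasurable (hACint1 c' j).aestronglyMeasurable
      rw [h, hACmean, zero_mul]
  -- D-type facts
  have hXXint : ∀ k j, Integrable (fun ω => (τr ω k - τv k)*(τr ω j - τv j)) P := fun k j =>
    aux_integrable_mul_L2 (hXmem k) (hXmem j)
  have hWWint : ∀ k j, Integrable (fun ω => (τo ω k - τv k)*(τo ω j - τv j)) P := fun k j =>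
    aux_integrable_mul_L2 (hWmem k) (hWmem j)
  have hXXmean : ∀ k j, k ≠ j → ∫ ω, (τr ω k - τv k)*(τr ω j - τv j) ∂P = 0 := by
    intro k j hkj
    have hind : IndepFun (fun ω => τr ω k - τv k) (fun ω => τr ω j - τv j) P :=
      (hτr_indep.indepFun hkj).comp (measurable_id.sub_const _) (measurable_id.sub_const _)
    have h : ∫ ω, (τr ω k - τv k)*(τr ω j - τv j) ∂P
        = (∫ ω, (τr ω k - τv k) ∂P) * ∫ ω, (τr ω j - τv j) ∂P :=
      hind.integral_fun_mul_eq_mul_integral (hXi1 k).aestronglyMeasurable (hXi1 j).aestronglyMeasurable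
    rw [h, hEX1, zero_mul]
  have hDind : ∀ k j, IndepFun (fun ω => (τr ω k - τv k)*(τr ω j - τv j))
      (fun ω => (τo ω k - τv k)*(τo ω j - τv j)) P := by
    intro k j
    exact hro_indep.comp
      (((measurable_pi_apply k).sub_const _).mul ((measurable_pi_apply j).sub_const _))
      (((measurable_pi_apply k).sub_const _).mul ((measurable_pi_apply j).sub_const _))
  have hDrw : ∀ (k j : Fin K),
      (fun ω => ((d k * σr k^2)*((τr ω k - τv k)*(τo ω k - τv k)))
        * ((d j * σr j^2)*((τr ω j - τv j)*(τo ω j - τv j))))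
      = fun ω => ((d k * σr k^2)*(d j * σr j^2))
          * (((τr ω k - τv k)*(τr ω j - τv j)) * ((τo ω k - τv k)*(τo ω j - τv j))) :=
    fun k j => funext fun ω => by ring
  have hDint : ∀ k j, Integrable
      (fun ω => ((d k * σr k^2)*((τr ω k - τv k)*(τo ω k - τv k)))
        * ((d j * σr j^2)*((τr ω j - τv j)*(τo ω j - τv j)))) P := by
    intro k j
    rw [hDrw]
    exact ((hDind k j).integrable_mul (hXXint k j) (hWWint k j)).const_mul _
  have hDval : ∀ k j,
      ∫ ω, ((d k * σr k^2)*((τr ω k - τv k)*(τo ω k - τv k)))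
        * ((d j * σr j^2)*((τr ω j - τv j)*(τo ω j - τv j))) ∂P
      = ((d k * σr k^2)*(d j * σr j^2))
          * ((∫ ω, (τr ω k - τv k)*(τr ω j - τv j) ∂P)
            * ∫ ω, (τo ω k - τv k)*(τo ω j - τv j) ∂P) := by
    intro k j
    rw [show (∫ ω, ((d k * σr k^2)*((τr ω k - τv k)*(τo ω k - τv k)))
        * ((d j * σr j^2)*((τr ω j - τv j)*(τo ω j - τv j))) ∂P)
        = ∫ ω, ((d k * σr k^2)*(d j * σr j^2))
          * (((τr ω k - τv k)*(τr ω j - τv j)) * ((τo ω k - τv k)*(τo ω j - τv j))) ∂P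
        from congrArg _ (hDrw k j), integral_const_mul]
    congr 1
    exact (hDind k j).integral_fun_mul_eq_mul_integral (hXXint k j).aestronglyMeasurable (hWWint k j).aestronglyMeasurable
  have hDcross : ∀ k j, k ≠ j →
      ∫ ω, ((d k * σr k^2)*((τr ω k - τv k)*(τo ω k - τv k)))
        * ((d j * σr j^2)*((τr ω j - τv j)*(τo ω j - τv j))) ∂P = 0 := by
    intro k j hkj
    rw [hDval k j, hXXmean k j hkj, zero_mul, mul_zero]
  have hXXself : ∀ k, ∫ ω, (τr ω k - τv k)*(τr ω k - τv k) ∂P = σr k^2 := by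
    intro k
    rw [show (fun ω => (τr ω k - τv k)*(τr ω k - τv k)) = fun ω => (τr ω k - τv k)^2
      from funext fun ω => by ring]
    exact hEX2 k
  have hWWself : ∀ k, ∫ ω, (τo ω k - τv k)*(τo ω k - τv k) ∂P = σo k^2 + ξ k^2 := by
    intro k
    rw [show (fun ω => (τo ω k - τv k)*(τo ω k - τv k)) = fun ω => (τo ω k - τv k)^2
      from funext fun ω => by ring]
    exact hEW2 k
  -- the three sums
  set SA : Ω → ℝ := fun ω => ∑ k, d k * (σr k^2 - (τr ω k - τv k)^2) with hSA
  set SC : Ω → ℝ := fun ω => ∑ k, (d k * σr k^2) * (σr k^2 - (τr ω k - τv k)^2) with hSC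
  set SD : Ω → ℝ := fun ω => ∑ k, (d k * σr k^2) * ((τr ω k - τv k)*(τo ω k - τv k)) with hSD
  have hSAint2 : Integrable (fun ω => (SA ω)^2) P := by
    refine aux_integrable_sum_sq _ (fun k j => ?_)
    rcases eq_or_ne k j with rfl | hkj
    · exact hACint2 (d k) k
    · exact (hACcross (d k) (d j) k j hkj).1
  have hSAval : ∫ ω, (SA ω)^2 ∂P = 2 * ∑ k, d k^2 * σr k^4 := by
    rw [hSA]
    rw [aux_integral_sum_sq _ (fun k j => by
        rcases eq_or_ne k j with rfl | hkj
        · exact hACint2 (d k) k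
        · exact (hACcross (d k) (d j) k j hkj).1)
      (fun k j hkj => (hACcross (d k) (d j) k j hkj).2)]
    rw [Finset.mul_sum]
    refine Finset.sum_congr rfl (fun k _ => ?_)
    rw [hACval (d k) k]
    ring
  have hSCint2 : Integrable (fun ω => (SC ω)^2) P := by
    refine aux_integrable_sum_sq _ (fun k j => ?_)
    rcases eq_or_ne k j with rfl | hkj
    · exact hACint2 (d k * σr k^2) k
    · exact (hACcross (d k * σr k^2) (d j * σr j^2) k j hkj).1
  have hSCval : ∫ ω, (SC ω)^2 ∂P = 2 * ∑ k, d k^2 * σr k^8 := by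
    rw [hSC]
    rw [aux_integral_sum_sq _ (fun k j => by
        rcases eq_or_ne k j with rfl | hkj
        · exact hACint2 (d k * σr k^2) k
        · exact (hACcross (d k * σr k^2) (d j * σr j^2) k j hkj).1)
      (fun k j hkj => (hACcross (d k * σr k^2) (d j * σr j^2) k j hkj).2)]
    rw [Finset.mul_sum]
    refine Finset.sum_congr rfl (fun k _ => ?_)
    rw [hACval (d k * σr k^2) k]
    ring
  have hSDint2 : Integrable (fun ω => (SD ω)^2) P :=
    aux_integrable_sum_sq _ (fun k j => hDint k j)
  have hSDval : ∫ ω, (SD ω)^2 ∂P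
      = ∑ k, d k^2 * σr k^6 * (σo k^2 + ξ k^2) := by
    rw [hSD]
    rw [aux_integral_sum_sq _ (fun k j => hDint k j) (fun k j hkj => hDcross k j hkj)]
    refine Finset.sum_congr rfl (fun k _ => ?_)
    rw [hDval k k, hXXself k, hWWself k]
    ring
  -- affine structure in l
  have hlin : ∀ (ω : Ω) (l : ℝ),
      (1 / (K : ℝ)) * ((∑ k, d k * σr k ^ 2)
          + l ^ 2 * ∑ k, d k * σr k ^ 4 * (τo ω k - τr ω k) ^ 2
          - 2 * l * ∑ k, d k * σr k ^ 4)
        - (1 / (K : ℝ)) * ∑ k, d k * ((τr ω k - l * σr k ^ 2 * (τr ω k - τo ω k)) - τv k) ^ 2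
      = (1/(K:ℝ)) * SA ω - 2 * l * ((1/(K:ℝ)) * (SC ω + SD ω)) := by
    intro ω l
    rw [hSA, hSC, hSD, ← mul_sub]
    rw [show (2:ℝ) * l * ((1/(K:ℝ)) * ((∑ k, (d k * σr k^2) * (σr k^2 - (τr ω k - τv k)^2))
        + ∑ k, (d k * σr k^2) * ((τr ω k - τv k)*(τo ω k - τv k))))
      = (1/(K:ℝ)) * (2 * l * ((∑ k, (d k * σr k^2) * (σr k^2 - (τr ω k - τv k)^2))
        + ∑ k, (d k * σr k^2) * ((τr ω k - τv k)*(τo ω k - τv k)))) from by ring, ← mul_sub]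
    congr 1
    simp only [Finset.mul_sum, ← Finset.sum_add_distrib, ← Finset.sum_sub_distrib]
    exact Finset.sum_congr rfl fun k _ => by ring
  -- the sup equals a max over the two endpoints
  have hsup : ∀ ω : Ω, (⨆ l : Set.Icc (0 : ℝ) 1,
          |(1 / (K : ℝ)) * ((∑ k, d k * σr k ^ 2)
              + (l : ℝ) ^ 2 * ∑ k, d k * σr k ^ 4 * (τo ω k - τr ω k) ^ 2
              - 2 * (l : ℝ) * ∑ k, d k * σr k ^ 4)
            - (1 / (K : ℝ)) * ∑ k, d k
                * ((τr ω k - (l : ℝ) * σr k ^ 2 * (τr ω k - τo ω k)) - τv k) ^ 2|)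
      = max |(1/(K:ℝ)) * SA ω|
          |(1/(K:ℝ)) * SA ω - 2*((1/(K:ℝ)) * (SC ω + SD ω))| := by
    intro ω
    have h1 : ∀ l : Set.Icc (0:ℝ) 1,
        |(1 / (K : ℝ)) * ((∑ k, d k * σr k ^ 2)
              + (l : ℝ) ^ 2 * ∑ k, d k * σr k ^ 4 * (τo ω k - τr ω k) ^ 2
              - 2 * (l : ℝ) * ∑ k, d k * σr k ^ 4)
            - (1 / (K : ℝ)) * ∑ k, d k
                * ((τr ω k - (l : ℝ) * σr k ^ 2 * (τr ω k - τo ω k)) - τv k) ^ 2|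
        = |(1/(K:ℝ)) * SA ω - 2 * (l:ℝ) * ((1/(K:ℝ)) * (SC ω + SD ω))| := fun l => by
      rw [hlin ω l]
    rw [iSup_congr h1]
    exact aux_ciSup_abs_affine _ _
  set M : Ω → ℝ := fun ω => max |(1/(K:ℝ)) * SA ω|
      |(1/(K:ℝ)) * SA ω - 2*((1/(K:ℝ)) * (SC ω + SD ω))| with hM
  -- measurability
  have hSAmeas : Measurable SA := by
    rw [hSA]
    exact Finset.measurable_sum _ (fun k _ =>
      ((((hτr_meas k).sub_const (τv k)).pow_const 2).const_sub (σr k^2)).const_mul (d k))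
  have hSCmeas : Measurable SC := by
    rw [hSC]
    exact Finset.measurable_sum _ (fun k _ =>
      ((((hτr_meas k).sub_const (τv k)).pow_const 2).const_sub (σr k^2)).const_mul _)
  have hSDmeas : Measurable SD := by
    rw [hSD]
    exact Finset.measurable_sum _ (fun k _ =>
      (((hτr_meas k).sub_const (τv k)).mul ((hτo_meas k).sub_const (τv k))).const_mul _)
  have hMmeas : Measurable M := by
    rw [hM]
    exact ((hSAmeas.const_mul _).abs).max
      (((hSAmeas.const_mul _).sub (((hSCmeas.add hSDmeas).const_mul _).const_mul 2)).abs)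
  -- the dominating function
  have hg1 : Integrable (fun ω => (3*(1/(K:ℝ))^2)*(SA ω)^2) P := hSAint2.const_mul _
  have hg2 : Integrable (fun ω => (16*(1/(K:ℝ))^2)*(SC ω)^2) P := hSCint2.const_mul _
  have hg3 : Integrable (fun ω => (16*(1/(K:ℝ))^2)*(SD ω)^2) P := hSDint2.const_mul _
  have hg23 : Integrable (fun ω => (16*(1/(K:ℝ))^2)*(SC ω)^2
      + (16*(1/(K:ℝ))^2)*(SD ω)^2) P := by
    have h := hg2.add hg3; exact h
  have hgint : Integrable (fun ω => (3*(1/(K:ℝ))^2)*(SA ω)^2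
      + ((16*(1/(K:ℝ))^2)*(SC ω)^2 + (16*(1/(K:ℝ))^2)*(SD ω)^2)) P := by
    have h := hg1.add hg23; exact h
  have hMb : ∀ ω, (M ω)^2 ≤ (3*(1/(K:ℝ))^2)*(SA ω)^2
      + ((16*(1/(K:ℝ))^2)*(SC ω)^2 + (16*(1/(K:ℝ))^2)*(SD ω)^2) := by
    intro ω
    have e1 : (2:ℝ)*((1/(K:ℝ))*(SC ω + SD ω))
        = 2*(((1/(K:ℝ))*SC ω) + ((1/(K:ℝ))*SD ω)) := by ring
    have h := aux_max_sq_bound ((1/(K:ℝ))*SA ω) ((1/(K:ℝ))*SC ω) ((1/(K:ℝ))*SD ω)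
    rw [hM]
    simp only []
    rw [e1]
    calc (max |(1/(K:ℝ)) * SA ω|
        |(1/(K:ℝ)) * SA ω - 2*(((1/(K:ℝ))*SC ω) + ((1/(K:ℝ))*SD ω))|)^2
        ≤ 3*((1/(K:ℝ))*SA ω)^2 + 16*((1/(K:ℝ))*SC ω)^2 + 16*((1/(K:ℝ))*SD ω)^2 := h
      _ = (3*(1/(K:ℝ))^2)*(SA ω)^2
          + ((16*(1/(K:ℝ))^2)*(SC ω)^2 + (16*(1/(K:ℝ))^2)*(SD ω)^2) := by ring
  have hM2int : Integrable (fun ω => (M ω)^2) P := by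
    refine Integrable.mono' hgint ((hMmeas.pow_const 2).aestronglyMeasurable) ?_
    filter_upwards with ω
    rw [Real.norm_eq_abs, abs_of_nonneg (sq_nonneg _)]
    exact hMb ω
  have hM2val : ∫ ω, (M ω)^2 ∂P ≤ (1/(K:ℝ))^2 * (6 * (∑ k, d k^2 * σr k^4)
      + 32 * (∑ k, d k^2 * σr k^8)
      + 16 * (∑ k, d k^2 * σr k^6 * σo k^2) + 16 * (∑ k, d k^2 * σr k^6 * ξ k^2)) := by
    have hmono := integral_mono hM2int hgint hMb
    have hgval : ∫ ω, ((3*(1/(K:ℝ))^2)*(SA ω)^2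
        + ((16*(1/(K:ℝ))^2)*(SC ω)^2 + (16*(1/(K:ℝ))^2)*(SD ω)^2)) ∂P
        = (3*(1/(K:ℝ))^2) * (2 * ∑ k, d k^2 * σr k^4)
          + ((16*(1/(K:ℝ))^2) * (2 * ∑ k, d k^2 * σr k^8)
            + (16*(1/(K:ℝ))^2) * (∑ k, d k^2 * σr k^6 * (σo k^2 + ξ k^2))) := by
      rw [integral_add hg1 hg23, integral_add hg2 hg3, integral_const_mul, integral_const_mul,
        integral_const_mul, hSAval, hSCval, hSDval]
    have hsplit : ∑ k, d k^2 * σr k^6 * (σo k^2 + ξ k^2)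
        = (∑ k, d k^2 * σr k^6 * σo k^2) + ∑ k, d k^2 * σr k^6 * ξ k^2 := by
      rw [← Finset.sum_add_distrib]
      exact Finset.sum_congr rfl fun k _ => by ring
    rw [hgval, hsplit] at hmono
    calc ∫ ω, (M ω)^2 ∂P ≤ _ := hmono
      _ = (1/(K:ℝ))^2 * (6 * (∑ k, d k^2 * σr k^4) + 32 * (∑ k, d k^2 * σr k^8)
          + 16 * (∑ k, d k^2 * σr k^6 * σo k^2) + 16 * (∑ k, d k^2 * σr k^6 * ξ k^2)) := by
        ring
  -- rewrite the goal in terms of M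
  have hfun : (fun ω =>
      (⨆ l : Set.Icc (0 : ℝ) 1,
          |(1 / (K : ℝ)) * ((∑ k, d k * σr k ^ 2)
              + (l : ℝ) ^ 2 * ∑ k, d k * σr k ^ 4 * (τo ω k - τr ω k) ^ 2
              - 2 * (l : ℝ) * ∑ k, d k * σr k ^ 4)
            - (1 / (K : ℝ)) * ∑ k, d k
                * ((τr ω k - (l : ℝ) * σr k ^ 2 * (τr ω k - τo ω k)) - τv k) ^ 2|) ^ 2)
      = fun ω => (M ω)^2 := funext fun ω => by rw [hsup ω, hM]
  have hset : ∀ ε : ℝ, {ω | ε ≤ ⨆ l : Set.Icc (0 : ℝ) 1,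
          |(1 / (K : ℝ)) * ((∑ k, d k * σr k ^ 2)
              + (l : ℝ) ^ 2 * ∑ k, d k * σr k ^ 4 * (τo ω k - τr ω k) ^ 2
              - 2 * (l : ℝ) * ∑ k, d k * σr k ^ 4)
            - (1 / (K : ℝ)) * ∑ k, d k
                * ((τr ω k - (l : ℝ) * σr k ^ 2 * (τr ω k - τo ω k)) - τv k) ^ 2|}
      = {ω | ε ≤ M ω} := by
    intro ε
    ext ω
    simp only [Set.mem_setOf_eq, hsup ω, hM]
  refine ⟨?_, ?_, ?_⟩
  · rw [hfun]; exact hM2int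
  · rw [hfun]; exact hM2val
  · intro ε hε
    rw [hset ε, hfun]
    have hnn : 0 ≤ᵐ[P] fun ω => (M ω)^2 := ae_of_all _ fun ω => sq_nonneg _
    have h1 := mul_meas_ge_le_integral_of_nonneg hnn hM2int (ε^2)
    refine le_trans ?_ h1
    have hsub : {ω | ε ≤ M ω} ⊆ {ω | ε^2 ≤ (M ω)^2} := fun ω h =>
      pow_le_pow_left₀ hε.le h 2
    have hfin : P {ω | ε^2 ≤ (M ω)^2} ≠ ⊤ := measure_ne_top _ _
    have hto := ENNReal.toReal_mono hfin (measure_mono hsub)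
    exact mul_le_mul_of_nonneg_left hto (sq_nonneg ε)


lemma aux_limsup_bound {r : ℕ → ℝ} (h : limsup (fun K => ((r K : ℝ) : EReal)) atTop < ⊤) :
    ∃ C : ℝ, ∀ᶠ K in atTop, r K ≤ C := by
  obtain ⟨b, hb1, hb2⟩ := exists_between h
  have hbne : b ≠ ⊥ := ne_of_gt (lt_of_le_of_lt bot_le hb1)
  lift b to ℝ using ⟨hb2.ne, hbne⟩
  refine ⟨b, ?_⟩
  filter_upwards [eventually_lt_of_limsup_lt hb1] with K hK
  exact_mod_cast hK.le

/-- **Uniform convergence of the URE to the loss (variance-weighted shrinkage).**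
Under the four limsup moment conditions,
`sup_{0 ≤ λ ≤ 1} |URE_K(λ) − L_K(λ)| → 0` in `L²` (and hence in probability) as
`K → ∞`, where
`URE_K(λ) = (1/K)[∑_k d_k σ_rk² + λ² ∑_k d_k σ_rk⁴ Δ_k² − 2λ ∑_k d_k σ_rk⁴]` and
`L_K(λ) = (1/K) ∑_k d_k (τ̂_rk − λ σ_rk² (τ̂_rk − τ̂_ok) − τ_k)²`. -/
theorem ure_uniform_loss_approximation_variance_weighted
(Ω : ℕ → Type*) [mΩ : ∀ K, MeasurableSpace (Ω K)]
    (μ : ∀ K, Measure (Ω K)) (hμ : ∀ K, IsProbabilityMeasure (μ K))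
    (d σr σo ξ τv : ∀ K : ℕ, Fin K → ℝ)
    (τr τo : ∀ K : ℕ, Ω K → Fin K → ℝ)
    (hd : ∀ K k, 0 < d K k) (hdsum : ∀ K, 1 ≤ K → ∑ k, d K k = 1)
    (hσr : ∀ K k, 0 < σr K k)
    (hτr_meas : ∀ K k, Measurable fun ω => τr K ω k)
    (hτo_meas : ∀ K k, Measurable fun ω => τo K ω k)
    (hτr_gauss : ∀ K k, (μ K).map (fun ω => τr K ω k)
        = gaussianReal (τv K k) ⟨σr K k ^ 2, sq_nonneg _⟩)
    (hτr_indep : ∀ K, iIndepFun (fun k ω => τr K ω k) (μ K))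
    (hτo_indep : ∀ K, iIndepFun (fun k ω => τo K ω k) (μ K))
    (hro_indep : ∀ K, IndepFun (fun ω => τr K ω) (fun ω => τo K ω) (μ K))
    (hτo_mem : ∀ K k, MemLp (fun ω => τo K ω k) 2 (μ K))
    (hτo_mean : ∀ K k, ∫ ω, τo K ω k ∂(μ K) = τv K k + ξ K k)
    (hτo_var : ∀ K k, variance (fun ω => τo K ω k) (μ K) = σo K k ^ 2)
    (hlim1 : limsup (fun K : ℕ =>
        (((1 / (K : ℝ)) * ∑ k, (d K k) ^ 2 * (σr K k) ^ 6 * (ξ K k) ^ 2 : ℝ) : EReal))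
        atTop < ⊤)
    (hlim2 : limsup (fun K : ℕ =>
        (((1 / (K : ℝ)) * ∑ k, (d K k) ^ 2 * (σr K k) ^ 6 * (σo K k) ^ 2 : ℝ) : EReal))
        atTop < ⊤)
    (hlim3 : limsup (fun K : ℕ =>
        (((1 / (K : ℝ)) * ∑ k, (d K k) ^ 2 * (σr K k) ^ 8 : ℝ) : EReal))
        atTop < ⊤)
    (hlim4 : limsup (fun K : ℕ =>
        (((1 / (K : ℝ)) * ∑ k, (d K k) ^ 2 * (σr K k) ^ 4 : ℝ) : EReal))
        atTop < ⊤) :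
    Tendsto (fun K : ℕ => ∫ ω,
        (⨆ l : Set.Icc (0 : ℝ) 1,
          |(1 / (K : ℝ)) * ((∑ k, d K k * σr K k ^ 2)
              + (l : ℝ) ^ 2 * ∑ k, d K k * σr K k ^ 4 * (τo K ω k - τr K ω k) ^ 2
              - 2 * (l : ℝ) * ∑ k, d K k * σr K k ^ 4)
            - (1 / (K : ℝ)) * ∑ k, d K k
                * ((τr K ω k - (l : ℝ) * σr K k ^ 2 * (τr K ω k - τo K ω k))
                    - τv K k) ^ 2|) ^ 2
        ∂(μ K)) atTop (nhds 0)
    ∧ ∀ ε : ℝ, 0 < ε →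
        Tendsto (fun K : ℕ => μ K {ω |
          ε ≤ ⨆ l : Set.Icc (0 : ℝ) 1,
            |(1 / (K : ℝ)) * ((∑ k, d K k * σr K k ^ 2)
                + (l : ℝ) ^ 2 * ∑ k, d K k * σr K k ^ 4 * (τo K ω k - τr K ω k) ^ 2
                - 2 * (l : ℝ) * ∑ k, d K k * σr K k ^ 4)
              - (1 / (K : ℝ)) * ∑ k, d K k
                  * ((τr K ω k - (l : ℝ) * σr K k ^ 2 * (τr K ω k - τo K ω k))
                      - τv K k) ^ 2|})
          atTop (nhds 0) := by
  have hkey := fun K : ℕ => by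
    haveI := hμ K
    exact aux_key (μ K) K (d K) (σr K) (σo K) (ξ K) (τv K) (τr K) (τo K)
      (hσr K) (hτr_meas K) (hτo_meas K) (hτr_gauss K) (hτr_indep K) (hro_indep K)
      (hτo_mem K) (hτo_mean K) (hτo_var K)
  -- the integral sequence
  set I : ℕ → ℝ := fun K => ∫ ω,
        (⨆ l : Set.Icc (0 : ℝ) 1,
          |(1 / (K : ℝ)) * ((∑ k, d K k * σr K k ^ 2)
              + (l : ℝ) ^ 2 * ∑ k, d K k * σr K k ^ 4 * (τo K ω k - τr K ω k) ^ 2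
              - 2 * (l : ℝ) * ∑ k, d K k * σr K k ^ 4)
            - (1 / (K : ℝ)) * ∑ k, d K k
                * ((τr K ω k - (l : ℝ) * σr K k ^ 2 * (τr K ω k - τo K ω k))
                    - τv K k) ^ 2|) ^ 2
        ∂(μ K) with hI
  have hI0 : ∀ K, 0 ≤ I K := fun K => integral_nonneg (fun ω => sq_nonneg _)
  -- eventual bounds from the limsup hypotheses
  obtain ⟨C1, hC1⟩ := aux_limsup_bound hlim1
  obtain ⟨C2, hC2⟩ := aux_limsup_bound hlim2
  obtain ⟨C3, hC3⟩ := aux_limsup_bound hlim3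
  obtain ⟨C4, hC4⟩ := aux_limsup_bound hlim4
  set C : ℝ := 6*C4 + 32*C3 + 16*C2 + 16*C1 with hC
  have hIle : ∀ᶠ K in atTop, I K ≤ (1/(K:ℝ)) * C := by
    filter_upwards [hC1, hC2, hC3, hC4] with K h1 h2 h3 h4
    have hb := (hkey K).2.1
    have heq : (1/(K:ℝ))^2 * (6 * (∑ k, d K k^2 * σr K k^4) + 32 * (∑ k, d K k^2 * σr K k^8)
          + 16 * (∑ k, d K k^2 * σr K k^6 * σo K k^2) + 16 * (∑ k, d K k^2 * σr K k^6 * ξ K k^2))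
        = (1/(K:ℝ)) * (6 * ((1/(K:ℝ)) * ∑ k, d K k^2 * σr K k^4)
          + 32 * ((1/(K:ℝ)) * ∑ k, d K k^2 * σr K k^8)
          + 16 * ((1/(K:ℝ)) * ∑ k, d K k^2 * σr K k^6 * σo K k^2)
          + 16 * ((1/(K:ℝ)) * ∑ k, d K k^2 * σr K k^6 * ξ K k^2)) := by ring
    rw [heq] at hb
    refine le_trans hb ?_
    have hKnn : (0:ℝ) ≤ 1/(K:ℝ) := by positivity
    refine mul_le_mul_of_nonneg_left ?_ hKnn
    rw [hC]
    have e1 : (1/(K:ℝ)) * ∑ k, d K k^2 * σr K k^6 * ξ K k^2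
        = (1/(K:ℝ)) * ∑ k, (d K k)^2 * (σr K k)^6 * (ξ K k)^2 := rfl
    linarith [h1, h2, h3, h4]
  have htendC : Tendsto (fun K : ℕ => (1/(K:ℝ)) * C) atTop (nhds 0) := by
    have h := tendsto_one_div_atTop_nhds_zero_nat.mul_const C
    simpa using h
  have hItend : Tendsto I atTop (nhds 0) :=
    tendsto_of_tendsto_of_tendsto_of_le_of_le' tendsto_const_nhds htendC
      (Eventually.of_forall hI0) hIle
  refine ⟨hItend, ?_⟩
  intro ε hε
  have hup : ∀ K : ℕ, μ K {ω |
          ε ≤ ⨆ l : Set.Icc (0 : ℝ) 1,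
            |(1 / (K : ℝ)) * ((∑ k, d K k * σr K k ^ 2)
                + (l : ℝ) ^ 2 * ∑ k, d K k * σr K k ^ 4 * (τo K ω k - τr K ω k) ^ 2
                - 2 * (l : ℝ) * ∑ k, d K k * σr K k ^ 4)
              - (1 / (K : ℝ)) * ∑ k, d K k
                  * ((τr K ω k - (l : ℝ) * σr K k ^ 2 * (τr K ω k - τo K ω k))
                      - τv K k) ^ 2|}
        ≤ ENNReal.ofReal ((ε^2)⁻¹ * I K) := by
    intro K
    haveI := hμ K
    have h2 := (hkey K).2.2 ε hε
    have htr : (μ K {ω |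
          ε ≤ ⨆ l : Set.Icc (0 : ℝ) 1,
            |(1 / (K : ℝ)) * ((∑ k, d K k * σr K k ^ 2)
                + (l : ℝ) ^ 2 * ∑ k, d K k * σr K k ^ 4 * (τo K ω k - τr K ω k) ^ 2
                - 2 * (l : ℝ) * ∑ k, d K k * σr K k ^ 4)
              - (1 / (K : ℝ)) * ∑ k, d K k
                  * ((τr K ω k - (l : ℝ) * σr K k ^ 2 * (τr K ω k - τo K ω k))
                      - τv K k) ^ 2|}).toReal ≤ (ε^2)⁻¹ * I K := by
      have hmul := mul_le_mul_of_nonneg_left h2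
        (by positivity : (0:ℝ) ≤ (ε^2)⁻¹)
      rwa [← mul_assoc, inv_mul_cancel₀ (by positivity : (ε:ℝ)^2 ≠ 0), one_mul] at hmul
    calc μ K _ = ENNReal.ofReal ((μ K _).toReal) := (ENNReal.ofReal_toReal
          (measure_ne_top _ _)).symm
      _ ≤ ENNReal.ofReal ((ε^2)⁻¹ * I K) := ENNReal.ofReal_le_ofReal htr
  have hups : Tendsto (fun K => ENNReal.ofReal ((ε^2)⁻¹ * I K)) atTop (nhds 0) := by
    have h0 : Tendsto (fun K => (ε^2)⁻¹ * I K) atTop (nhds ((ε^2)⁻¹ * 0)) :=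
      hItend.const_mul _
    rw [mul_zero] at h0
    have h := ENNReal.tendsto_ofReal h0
    simpa using h
  exact tendsto_of_tendsto_of_tendsto_of_le_of_le tendsto_const_nhds hups
    (fun K => zero_le) hup
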